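/- Let L be a Lie algebra over ℂ and M a finite-dimensional complex L-module such that every L-submodule of M admits a complementary L-submodule (complete reducibility). Let h be an L-invariant Hermitian sesquilinear form on M that is nondegenerate on M. Then M admits an internal direct sum decomposition M = N₁ ⊕ … ⊕ N_r into L-submodules that are pairwise orthogonal with respect to h, such that the restriction of h to each N_i is nondegenerate and each N_i is either an irreducible L-submodule or the internal direct sum of two irreducible L-submodules each of which is totally isotropic for h. -/

import Mathlib

open Module

section Helpers

variable {L : Type*} [LieRing L] [LieAlgebra ℂ L]
variable {M : Type*} [AddCommGroup M] [Module ℂ M] [LieRingModule L M] [LieModule ℂ L M]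

/-- The orthogonal complement of a Lie submodule w.r.t. an invariant sesquilinear form. -/
def horthogonal (h : M →ₗ⋆[ℂ] M →ₗ[ℂ] ℂ)
    (hInv : ∀ (x : L) (v w : M), h ⁅x, v⁆ w + h v ⁅x, w⁆ = 0)
    (W : LieSubmodule ℂ L M) : LieSubmodule ℂ L M where
  carrier := {v | ∀ w ∈ W, h v w = 0}
  add_mem' := by
    intro a b ha hb w hw
    rw [map_add, LinearMap.add_apply, ha w hw, hb w hw, add_zero]
  zero_mem' := by intro w hw; simp
  smul_mem' := by
    intro c v hv w hw
    rw [map_smulₛₗ, LinearMap.smul_apply, hv w hw, smul_zero]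
  lie_mem := by
    intro x v hv w hw
    have h1 := hInv x v w
    have h2 : h v ⁅x, w⁆ = 0 := hv _ (W.lie_mem hw)
    rw [h2, add_zero] at h1
    exact h1

theorem mem_horthogonal {h : M →ₗ⋆[ℂ] M →ₗ[ℂ] ℂ}
    {hInv : ∀ (x : L) (v w : M), h ⁅x, v⁆ w + h v ⁅x, w⁆ = 0}
    {W : LieSubmodule ℂ L M} {v : M} :
    v ∈ horthogonal h hInv W ↔ ∀ w ∈ W, h v w = 0 := Iff.rfl

/-- Key complement lemma: if `h` is nondegenerate on `P`, then every vector can be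
corrected by an element of `P` to be orthogonal to `P`. -/
theorem key_compl [FiniteDimensional ℂ M] (h : M →ₗ⋆[ℂ] M →ₗ[ℂ] ℂ)
    (P : Submodule ℂ M)
    (hP : ∀ p ∈ P, (∀ w ∈ P, h p w = 0) → p = 0) (u : M) :
    ∃ p ∈ P, ∀ w ∈ P, h (u - p) w = 0 := by
  let Φ : P →ₗ[ℝ] Module.Dual ℂ P :=
    { toFun := fun p => (h (p : M)).domRestrict P
      map_add' := by
        intro p q
        ext w
        simp [LinearMap.domRestrict_apply]
      map_smul' := by
        intro r p
        ext w
        simp only [LinearMap.domRestrict_apply, RingHom.id_apply, LinearMap.smul_apply]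
        have h1 : ((r • p : P) : M) = (r : ℂ) • (p : M) := by
          rw [Submodule.coe_smul_of_tower]
          rw [← smul_one_smul ℂ r (p : M)]
          norm_num
        rw [h1, map_smulₛₗ, LinearMap.smul_apply, Complex.conj_ofReal]
        simp [Complex.real_smul]
    }
  have hinj : Function.Injective Φ := by
    rw [injective_iff_map_eq_zero]
    intro p hp
    have : (p : M) = 0 := by
      apply hP (p : M) p.2
      intro w hw
      have := LinearMap.congr_fun hp ⟨w, hw⟩
      simpa [Φ, LinearMap.domRestrict_apply] using this
    exact Subtype.ext this
  have hdim : finrank ℝ P = finrank ℝ (Module.Dual ℂ P) := by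
    have t1 : finrank ℝ ℂ * finrank ℂ P = finrank ℝ P :=
      Module.finrank_mul_finrank ℝ ℂ P
    have t2 : finrank ℝ ℂ * finrank ℂ (Module.Dual ℂ P) = finrank ℝ (Module.Dual ℂ P) :=
      Module.finrank_mul_finrank ℝ ℂ (Module.Dual ℂ P)
    have t3 : finrank ℂ (Module.Dual ℂ P) = finrank ℂ P := Subspace.dual_finrank_eq
    rw [← t1, ← t2, t3]
  have hsurj : Function.Surjective Φ :=
    (LinearMap.injective_iff_surjective_of_finrank_eq_finrank hdim).mp hinj
  obtain ⟨p, hp⟩ := hsurj ((h u).domRestrict P)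
  refine ⟨(p : M), p.2, ?_⟩
  intro w hw
  have h1 : h (p : M) w = h u w := by
    have := LinearMap.congr_fun hp ⟨w, hw⟩
    simpa [Φ, LinearMap.domRestrict_apply] using this
  rw [map_sub, LinearMap.sub_apply, h1, sub_self]

/-- Any nonzero Lie submodule contains an irreducible one. -/
theorem exists_irred [FiniteDimensional ℂ M] (X : LieSubmodule ℂ L M) (hX : X ≠ ⊥) :
    ∃ A : LieSubmodule ℂ L M, A ≤ X ∧ A ≠ ⊥ ∧ ∀ W ≤ A, W = ⊥ ∨ W = A := by
  classical
  have hex : ∃ n, ∃ A : LieSubmodule ℂ L M,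
      A ≤ X ∧ A ≠ ⊥ ∧ finrank ℂ (A : Submodule ℂ M) = n :=
    ⟨_, X, le_rfl, hX, rfl⟩
  obtain ⟨A, hAX, hA0, hAn⟩ := Nat.find_spec hex
  refine ⟨A, hAX, hA0, fun W hW => ?_⟩
  by_cases hW0 : W = ⊥
  · exact Or.inl hW0
  · right
    have h1 : Nat.find hex ≤ finrank ℂ (W : Submodule ℂ M) :=
      Nat.find_min' hex ⟨W, hW.trans hAX, hW0, rfl⟩
    have h2 : (W : Submodule ℂ M) = (A : Submodule ℂ M) := by
      apply Submodule.eq_of_le_of_finrank_le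
        ((LieSubmodule.toSubmodule_le_toSubmodule (N := W) (N' := A)).mpr hW)
      omega
    exact (LieSubmodule.toSubmodule_inj (N := W) (N' := A)).mp h2

/-- Complete reducibility descends to submodules. -/
theorem compl_within (hss : ∀ W : LieSubmodule ℂ L M, ∃ W' : LieSubmodule ℂ L M, IsCompl W W')
    {W U : LieSubmodule ℂ L M} (hWU : W ≤ U) :
    ∃ C, C ≤ U ∧ W ⊓ C = ⊥ ∧ W ⊔ C = U := by
  obtain ⟨W', hc⟩ := hss W
  refine ⟨W' ⊓ U, inf_le_right, ?_, ?_⟩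
  · rw [← le_bot_iff]
    calc W ⊓ (W' ⊓ U) ≤ W ⊓ W' := inf_le_inf_left _ inf_le_left
    _ = ⊥ := hc.inf_eq_bot
  · rw [← sup_inf_assoc_of_le _ hWU, hc.sup_eq_top, top_inf_eq]

/-- If `U` is not contained in `Z`, there is an irreducible submodule of `U` not
contained in `Z`. -/
theorem exists_irred_not_le [FiniteDimensional ℂ M]
    (hss : ∀ W : LieSubmodule ℂ L M, ∃ W' : LieSubmodule ℂ L M, IsCompl W W')
    (U Z : LieSubmodule ℂ L M) (hUZ : ¬ U ≤ Z) :
    ∃ B, B ≤ U ∧ (B ≠ ⊥ ∧ ∀ W ≤ B, W = ⊥ ∨ W = B) ∧ ¬ B ≤ Z := by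
  by_contra hcon
  push_neg at hcon
  set T : LieSubmodule ℂ L M :=
    ⨆ (W : {W : LieSubmodule ℂ L M // W ≤ U ∧ W ≠ ⊥ ∧ ∀ V ≤ W, V = ⊥ ∨ V = W}), (W : LieSubmodule ℂ L M) with hT
  have hTU : T ≤ U := iSup_le fun W => W.2.1
  obtain ⟨C, hCU, hinf, hsup⟩ := compl_within hss hTU
  have hC : C = ⊥ := by
    by_contra hC0
    obtain ⟨A, hAC, hA0, hAirr⟩ := exists_irred C hC0
    have hAT : A ≤ T :=
      le_iSup (fun W : {W : LieSubmodule ℂ L M // W ≤ U ∧ W ≠ ⊥ ∧ ∀ V ≤ W, V = ⊥ ∨ V = W} =>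
        (W : LieSubmodule ℂ L M)) ⟨A, hAC.trans hCU, hA0, hAirr⟩
    have : A ≤ ⊥ := hinf ▸ le_inf hAT hAC
    exact hA0 (le_bot_iff.mp this)
  apply hUZ
  have hTU' : T = U := by rw [hC, sup_bot_eq] at hsup; exact hsup
  rw [← hTU']
  exact iSup_le fun W => hcon W W.2.1 ⟨W.2.2.1, W.2.2.2⟩

/-- Main induction. -/
theorem main_aux [FiniteDimensional ℂ M]
    (hss : ∀ W : LieSubmodule ℂ L M, ∃ W' : LieSubmodule ℂ L M, IsCompl W W')
    (h : M →ₗ⋆[ℂ] M →ₗ[ℂ] ℂ)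
    (hHerm : ∀ v w : M, h w v = (starRingEnd ℂ) (h v w))
    (hInv : ∀ (x : L) (v w : M), h ⁅x, v⁆ w + h v ⁅x, w⁆ = 0) :
    ∀ (n : ℕ) (U : LieSubmodule ℂ L M), finrank ℂ (U : Submodule ℂ M) ≤ n →
      (∀ v ∈ U, (∀ w ∈ U, h v w = 0) → v = 0) →
      ∃ (r : ℕ) (N : Fin r → LieSubmodule ℂ L M),
        (∀ i, N i ≤ U) ∧
        (⨆ i, N i) = U ∧
        (∀ i j, i ≠ j → ∀ v ∈ N i, ∀ w ∈ N j, h v w = 0) ∧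
        (∀ i, ∀ v ∈ N i, (∀ w ∈ N i, h v w = 0) → v = 0) ∧
        (∀ i,
          (N i ≠ ⊥ ∧ ∀ W ≤ N i, W = ⊥ ∨ W = N i) ∨
          ∃ A B : LieSubmodule ℂ L M,
            (A ≠ ⊥ ∧ ∀ W ≤ A, W = ⊥ ∨ W = A) ∧
            (B ≠ ⊥ ∧ ∀ W ≤ B, W = ⊥ ∨ W = B) ∧
            (∀ v ∈ A, ∀ w ∈ A, h v w = 0) ∧
            (∀ v ∈ B, ∀ w ∈ B, h v w = 0) ∧
            A ⊓ B = ⊥ ∧ A ⊔ B = N i) := by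
  intro n
  induction n with
  | zero =>
    intro U hUn hU
    have hU0 : U = ⊥ := by
      have : finrank ℂ (U : Submodule ℂ M) = 0 := Nat.le_zero.mp hUn
      have h2 : (U : Submodule ℂ M) = ⊥ := Submodule.finrank_eq_zero.mp this
      apply (LieSubmodule.toSubmodule_inj (N := U) (N' := ⊥)).mp
      rw [h2, LieSubmodule.bot_toSubmodule]
    exact ⟨0, Fin.elim0, fun i => i.elim0, by simp [hU0], fun i => i.elim0,
      fun i => i.elim0, fun i => i.elim0⟩
  | succ n IH =>
    intro U hUn hU
    by_cases hU0 : U = ⊥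
    · exact ⟨0, Fin.elim0, fun i => i.elim0, by simp [hU0], fun i => i.elim0,
        fun i => i.elim0, fun i => i.elim0⟩
    obtain ⟨A, hAU, hA0, hAirr⟩ := exists_irred U hU0
    suffices hpeel : ∀ P : LieSubmodule ℂ L M, P ≤ U → P ≠ ⊥ →
        (∀ p ∈ P, (∀ w ∈ P, h p w = 0) → p = 0) →
        ((P ≠ ⊥ ∧ ∀ W ≤ P, W = ⊥ ∨ W = P) ∨
          ∃ A B : LieSubmodule ℂ L M,
            (A ≠ ⊥ ∧ ∀ W ≤ A, W = ⊥ ∨ W = A) ∧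
            (B ≠ ⊥ ∧ ∀ W ≤ B, W = ⊥ ∨ W = B) ∧
            (∀ v ∈ A, ∀ w ∈ A, h v w = 0) ∧
            (∀ v ∈ B, ∀ w ∈ B, h v w = 0) ∧
            A ⊓ B = ⊥ ∧ A ⊔ B = P) →
        ∃ (r : ℕ) (N : Fin r → LieSubmodule ℂ L M),
          (∀ i, N i ≤ U) ∧
          (⨆ i, N i) = U ∧
          (∀ i j, i ≠ j → ∀ v ∈ N i, ∀ w ∈ N j, h v w = 0) ∧
          (∀ i, ∀ v ∈ N i, (∀ w ∈ N i, h v w = 0) → v = 0) ∧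
          (∀ i,
            (N i ≠ ⊥ ∧ ∀ W ≤ N i, W = ⊥ ∨ W = N i) ∨
            ∃ A B : LieSubmodule ℂ L M,
              (A ≠ ⊥ ∧ ∀ W ≤ A, W = ⊥ ∨ W = A) ∧
              (B ≠ ⊥ ∧ ∀ W ≤ B, W = ⊥ ∨ W = B) ∧
              (∀ v ∈ A, ∀ w ∈ A, h v w = 0) ∧
              (∀ v ∈ B, ∀ w ∈ B, h v w = 0) ∧
              A ⊓ B = ⊥ ∧ A ⊔ B = N i) by
      by_cases hAnd : ∀ a ∈ A, (∀ w ∈ A, h a w = 0) → a = 0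
      · exact hpeel A hAU hA0 hAnd (Or.inl ⟨hA0, hAirr⟩)
      · -- A is totally isotropic
        have hAiso : ∀ v ∈ A, ∀ w ∈ A, h v w = 0 := by
          push_neg at hAnd
          obtain ⟨a, haA, haorth, ha0⟩ := hAnd
          have hrad : A ⊓ horthogonal h hInv A = A := by
            rcases hAirr (A ⊓ horthogonal h hInv A) inf_le_left with hb | he
            · exfalso
              apply ha0
              have hmem : a ∈ A ⊓ horthogonal h hInv A :=
                (LieSubmodule.mem_inf _ _ _).mpr ⟨haA, haorth⟩
              rw [hb] at hmem
              exact (LieSubmodule.mem_bot _).mp hmem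
            · exact he
          intro v hv w hw
          rw [← hrad] at hv
          exact ((LieSubmodule.mem_inf _ _ _).mp hv).2 w hw
        have hUnotle : ¬ U ≤ horthogonal h hInv A := by
          intro hle
          apply hA0
          rw [LieSubmodule.eq_bot_iff]
          intro a ha
          apply hU a (hAU ha)
          intro w hw
          have h0 : h w a = 0 := hle hw a ha
          rw [hHerm w a, h0, map_zero]
        obtain ⟨B, hBU, ⟨hB0, hBirr⟩, hBnotle⟩ :=
          exists_irred_not_le hss U (horthogonal h hInv A) hUnotle
        have hBA : ∀ b ∈ B, (∀ a ∈ A, h b a = 0) → b = 0 := by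
          rcases hBirr (B ⊓ horthogonal h hInv A) inf_le_left with hb | he
          · intro b hbB hball
            have hmem : b ∈ B ⊓ horthogonal h hInv A :=
              (LieSubmodule.mem_inf _ _ _).mpr ⟨hbB, hball⟩
            rw [hb] at hmem
            exact (LieSubmodule.mem_bot _).mp hmem
          · exact absurd (he ▸ inf_le_right) hBnotle
        have hAB : ∀ a ∈ A, (∀ b ∈ B, h a b = 0) → a = 0 := by
          rcases hAirr (A ⊓ horthogonal h hInv B) inf_le_left with hb | he
          · intro a haA hall
            have hmem : a ∈ A ⊓ horthogonal h hInv B :=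
              (LieSubmodule.mem_inf _ _ _).mpr ⟨haA, hall⟩
            rw [hb] at hmem
            exact (LieSubmodule.mem_bot _).mp hmem
          · exfalso
            apply hBnotle
            intro b hbB
            intro w hwA
            have hw' : w ∈ A ⊓ horthogonal h hInv B := by rw [he]; exact hwA
            have h1 : h w b = 0 := ((LieSubmodule.mem_inf _ _ _).mp hw').2 b hbB
            rw [hHerm w b, h1, map_zero]
        rcases hBirr (B ⊓ horthogonal h hInv B) inf_le_left with hb | he
        · -- h nondegenerate on B, peel B
          apply hpeel B hBU hB0 ?_ (Or.inl ⟨hB0, hBirr⟩)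
          intro b hbB hall
          have hmem : b ∈ B ⊓ horthogonal h hInv B :=
            (LieSubmodule.mem_inf _ _ _).mpr ⟨hbB, hall⟩
          rw [hb] at hmem
          exact (LieSubmodule.mem_bot _).mp hmem
        · -- B totally isotropic; peel A ⊔ B
          have hBiso : ∀ v ∈ B, ∀ w ∈ B, h v w = 0 := by
            intro v hv w hw
            have hv' : v ∈ B ⊓ horthogonal h hInv B := by rw [he]; exact hv
            exact ((LieSubmodule.mem_inf _ _ _).mp hv').2 w hw
          have hABinf : A ⊓ B = ⊥ := by
            rw [LieSubmodule.eq_bot_iff]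
            intro m hm
            obtain ⟨hmA, hmB⟩ := (LieSubmodule.mem_inf _ _ _).mp hm
            exact hAB m hmA (fun b hb => hBiso m hmB b hb)
          have hP0 : A ⊔ B ≠ ⊥ := by
            intro e
            exact hA0 (le_bot_iff.mp (e ▸ (le_sup_left : A ≤ A ⊔ B)))
          have hPnd : ∀ v ∈ A ⊔ B, (∀ w ∈ A ⊔ B, h v w = 0) → v = 0 := by
            intro v hv hall
            rw [LieSubmodule.mem_sup] at hv
            obtain ⟨a, haA, b, hbB, rfl⟩ := hv
            have hb0 : b = 0 := by
              apply hBA b hbB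
              intro a' ha'
              have h1 : h (a + b) a' = 0 := hall a' ((le_sup_left : A ≤ A ⊔ B) ha')
              rw [map_add, LinearMap.add_apply, hAiso a haA a' ha', zero_add] at h1
              exact h1
            rw [hb0, add_zero]
            apply hAB a haA
            intro b' hb'
            have h1 : h (a + b) b' = 0 := hall b' ((le_sup_right : B ≤ A ⊔ B) hb')
            rw [hb0, add_zero] at h1
            exact h1
          exact hpeel (A ⊔ B) (sup_le hAU hBU) hP0 hPnd
            (Or.inr ⟨A, B, ⟨hA0, hAirr⟩, ⟨hB0, hBirr⟩, hAiso, hBiso, hABinf, rfl⟩)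
    -- proof of hpeel
    intro P hPU hP0 hPnd hPstruct
    set X : LieSubmodule ℂ L M := horthogonal h hInv P ⊓ U with hXdef
    have hXU : X ≤ U := inf_le_right
    have hPX_inf : P ⊓ X = ⊥ := by
      rw [LieSubmodule.eq_bot_iff]
      intro m hm
      obtain ⟨hmP, hmX⟩ := (LieSubmodule.mem_inf _ _ _).mp hm
      obtain ⟨hmO, _⟩ := (LieSubmodule.mem_inf _ _ _).mp hmX
      exact hPnd m hmP (fun w hw => hmO w hw)
    have hPX_sup : P ⊔ X = U := by
      apply le_antisymm (sup_le hPU hXU)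
      intro u hu
      obtain ⟨p, hpP, hp⟩ := key_compl h (P : Submodule ℂ M)
        (fun p hp hall => hPnd p hp (fun w hw => hall w hw)) u
      rw [LieSubmodule.mem_sup]
      refine ⟨p, hpP, u - p, ?_, by abel⟩
      refine (LieSubmodule.mem_inf _ _ _).mpr ⟨fun w hw => hp w hw, ?_⟩
      exact U.sub_mem hu (hPU hpP)
    have hXnd : ∀ v ∈ X, (∀ w ∈ X, h v w = 0) → v = 0 := by
      intro v hv hall
      apply hU v (hXU hv)
      intro w hw
      rw [← hPX_sup, LieSubmodule.mem_sup] at hw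
      obtain ⟨p, hpP, x, hxX, rfl⟩ := hw
      rw [map_add]
      have h1 : h v p = 0 := ((LieSubmodule.mem_inf _ _ _).mp hv).1 p hpP
      rw [h1, hall x hxX, add_zero]
    have e1 : (P : Submodule ℂ M) ⊔ (X : Submodule ℂ M) = (U : Submodule ℂ M) := by
      rw [← LieSubmodule.sup_toSubmodule, hPX_sup]
    have e2 : (P : Submodule ℂ M) ⊓ (X : Submodule ℂ M) = ⊥ := by
      rw [← LieSubmodule.inf_toSubmodule, hPX_inf, LieSubmodule.bot_toSubmodule]
    have hfr := Submodule.finrank_sup_add_finrank_inf_eq (P : Submodule ℂ M) (X : Submodule ℂ M)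
    rw [e1, e2, finrank_bot] at hfr
    have hPpos : 0 < finrank ℂ (P : Submodule ℂ M) := by
      rcases Nat.eq_zero_or_pos (finrank ℂ (P : Submodule ℂ M)) with h0 | h0
      · exfalso
        apply hP0
        have : (P : Submodule ℂ M) = ⊥ := Submodule.finrank_eq_zero.mp h0
        apply (LieSubmodule.toSubmodule_inj (N := P) (N' := ⊥)).mp
        rw [this, LieSubmodule.bot_toSubmodule]
      · exact h0
    have hXn : finrank ℂ (X : Submodule ℂ M) ≤ n := by omega
    obtain ⟨r, N', hle', hsup', horth', hnd', hstr'⟩ := IH X hXn hXnd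
    refine ⟨r + 1, Fin.cons P N', ?_, ?_, ?_, ?_, ?_⟩
    · intro i
      rcases Fin.eq_zero_or_eq_succ i with rfl | ⟨j, rfl⟩
      · simpa using hPU
      · simpa using (hle' j).trans hXU
    · apply le_antisymm
      · apply iSup_le
        intro i
        rcases Fin.eq_zero_or_eq_succ i with rfl | ⟨j, rfl⟩
        · simpa using hPU
        · simpa using (hle' j).trans hXU
      · rw [← hPX_sup]
        apply sup_le
        · exact le_iSup_of_le 0 (by simp)
        · rw [← hsup']
          exact iSup_le fun i => le_iSup_of_le i.succ (by simp)
    · intro i j hij v hv w hw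
      rcases Fin.eq_zero_or_eq_succ i with rfl | ⟨ii, rfl⟩ <;>
        rcases Fin.eq_zero_or_eq_succ j with rfl | ⟨jj, rfl⟩
      · exact absurd rfl hij
      · -- v ∈ P, w ∈ N' jj
        rw [Fin.cons_zero] at hv
        rw [Fin.cons_succ] at hw
        have hwX : w ∈ X := hle' jj hw
        have hwO : h w v = 0 := ((LieSubmodule.mem_inf _ _ _).mp hwX).1 v hv
        have h1 : (starRingEnd ℂ) (h v w) = 0 := by rw [← hHerm v w]; exact hwO
        rw [starRingEnd_apply] at h1
        exact star_eq_zero.mp h1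
      · rw [Fin.cons_succ] at hv
        rw [Fin.cons_zero] at hw
        have hvX : v ∈ X := hle' ii hv
        exact ((LieSubmodule.mem_inf _ _ _).mp hvX).1 w hw
      · rw [Fin.cons_succ] at hv hw
        exact horth' ii jj (fun e => hij (by rw [e])) v hv w hw
    · intro i
      rcases Fin.eq_zero_or_eq_succ i with rfl | ⟨j, rfl⟩
      · simpa using hPnd
      · simpa using hnd' j
    · intro i
      rcases Fin.eq_zero_or_eq_succ i with rfl | ⟨j, rfl⟩
      · simpa using hPstruct
      · simpa using hstr' j

end Helpers

theorem orthogonal_decomposition_of_completely_reducible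
    {L : Type*} [LieRing L] [LieAlgebra ℂ L]
    {M : Type*} [AddCommGroup M] [Module ℂ M] [LieRingModule L M] [LieModule ℂ L M]
    [FiniteDimensional ℂ M]
    (hss : ∀ W : LieSubmodule ℂ L M, ∃ W' : LieSubmodule ℂ L M, IsCompl W W')
    (h : M →ₗ⋆[ℂ] M →ₗ[ℂ] ℂ)
    (hHerm : ∀ v w : M, h w v = (starRingEnd ℂ) (h v w))
    (hInv : ∀ (x : L) (v w : M), h ⁅x, v⁆ w + h v ⁅x, w⁆ = 0)
    (hNondeg : ∀ v : M, (∀ w : M, h v w = 0) → v = 0) :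
    ∃ (r : ℕ) (N : Fin r → LieSubmodule ℂ L M),
      (∀ i, Disjoint (N i) (⨆ j ≠ i, N j)) ∧
      (⨆ i, N i) = ⊤ ∧
      (∀ i j, i ≠ j → ∀ v ∈ N i, ∀ w ∈ N j, h v w = 0) ∧
      (∀ i, ∀ v ∈ N i, (∀ w ∈ N i, h v w = 0) → v = 0) ∧
      (∀ i,
        (N i ≠ ⊥ ∧ ∀ W ≤ N i, W = ⊥ ∨ W = N i) ∨
        ∃ A B : LieSubmodule ℂ L M,
          (A ≠ ⊥ ∧ ∀ W ≤ A, W = ⊥ ∨ W = A) ∧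
          (B ≠ ⊥ ∧ ∀ W ≤ B, W = ⊥ ∨ W = B) ∧
          (∀ v ∈ A, ∀ w ∈ A, h v w = 0) ∧
          (∀ v ∈ B, ∀ w ∈ B, h v w = 0) ∧
          A ⊓ B = ⊥ ∧ A ⊔ B = N i) := by
  obtain ⟨r, N, hle, hsup, horth, hnd, hstr⟩ :=
    main_aux hss h hHerm hInv (finrank ℂ (((⊤ : LieSubmodule ℂ L M)) : Submodule ℂ M))
      ⊤ le_rfl (fun v _ hall => hNondeg v (fun w => hall w (LieSubmodule.mem_top w)))
  refine ⟨r, N, ?_, hsup, horth, hnd, hstr⟩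
  intro i
  have hKle : (⨆ j, ⨆ _ : j ≠ i, N j) ≤ horthogonal h hInv (N i) := by
    refine iSup_le fun j => iSup_le fun hj => ?_
    intro v hv w hw
    exact horth j i hj v hv w hw
  rw [disjoint_iff, LieSubmodule.eq_bot_iff]
  intro m hm
  obtain ⟨hm1, hm2⟩ := (LieSubmodule.mem_inf _ _ _).mp hm
  exact hnd i m hm1 (fun w hw => hKle hm2 w hw)
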